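/- arXiv:2404.03250 — 3 statements merged into one kernel-verified Lean document; each statement's English description precedes it below -/
import Mathlib

section
/- For fixed x ∈ ℝ and λ > 0, the minimum over o ∈ ℝ of (1/2)(x - o)² + λ|o| equals the Huber loss h_λ(x), where h_λ(z) = z²/2 if |z| ≤ λ and h_λ(z) = λ|z| - λ²/2 otherwise. -/
theorem stmt_0 (x lam : ℝ) (hlam : 0 < lam) :
    IsLeast (Set.range fun o : ℝ => (1 / 2) * (x - o) ^ 2 + lam * |o|)
      (if |x| ≤ lam then x ^ 2 / 2 else lam * |x| - lam ^ 2 / 2) := by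
  constructor
  · split_ifs with h
    · exact ⟨0, by simp; ring⟩
    · push_neg at h
      rcases le_or_gt 0 x with hx | hx
      · refine ⟨x - lam, ?_⟩
        have hxl : lam < x := by rwa [abs_of_nonneg hx] at h
        simp only []
        rw [abs_of_nonneg hx, abs_of_nonneg (by linarith : (0:ℝ) ≤ x - lam)]
        ring
      · refine ⟨x + lam, ?_⟩
        have hxl : lam < -x := by rwa [abs_of_neg hx] at h
        simp only []
        rw [abs_of_neg hx, abs_of_neg (by linarith : x + lam < 0)]
        ring
  · rintro y ⟨o, rfl⟩
    simp only []
    have h1 : |x| - |o| ≤ |x - o| := abs_sub_abs_le_abs_sub x o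
    have h2 : (0:ℝ) ≤ |o| := abs_nonneg o
    have h3 : (0:ℝ) ≤ |x - o| := abs_nonneg _
    have h4 : |x - o| ^ 2 = (x - o) ^ 2 := sq_abs _
    have h5 : |x| ^ 2 = x ^ 2 := sq_abs _
    have h6 : x ≤ |x| := le_abs_self x
    have h7 : -x ≤ |x| := neg_le_abs x
    have h8 : o ≤ |o| := le_abs_self o
    have h9 : -o ≤ |o| := neg_le_abs o
    split_ifs with h
    · nlinarith [sq_nonneg (x - o), sq_nonneg o]
    · push_neg at h
      nlinarith [sq_nonneg (|x - o| - lam)]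
end

section
/- The group MCP loss function ρ^{gMCP}_{λ,γ}(z), defined as ‖z‖₂²/2 for ‖z‖₂ ≤ λ, (γλ‖z‖₂/(γ-1)) - ‖z‖₂²/(2(γ-1)) - γλ²/(2(γ-1)) for λ ≤ ‖z‖₂ ≤ γλ, and γλ²/2 for ‖z‖₂ > γλ, is continuous on ℝ^p and its gradient satisfies ∇ρ^{gMCP}_{λ,γ}(z) = z - Θ^{gMCP}(z; λ, γ) for all z with ‖z‖₂ ∉ {λ, γλ}. -/
/-- Group soft-thresholding `S(o; λ) = (1 - λ/‖o‖₂)₊ o`. -/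
noncomputable def groupSoftThresh (p : ℕ) (lam : ℝ) (o : EuclideanSpace ℝ (Fin p)) :
    EuclideanSpace ℝ (Fin p) :=
  max 0 (1 - lam / ‖o‖) • o

/-- Group MCP thresholding function. -/
noncomputable def groupMCPThresh (p : ℕ) (lam gam : ℝ) (o : EuclideanSpace ℝ (Fin p)) :
    EuclideanSpace ℝ (Fin p) :=
  if ‖o‖ ≤ gam * lam then (gam / (gam - 1)) • groupSoftThresh p lam o else o

/-- Group MCP loss function `ρ^{gMCP}_{λ,γ}`. -/
noncomputable def groupMCPLoss (p : ℕ) (lam gam : ℝ) (z : EuclideanSpace ℝ (Fin p)) : ℝ :=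
  if ‖z‖ ≤ lam then ‖z‖ ^ 2 / 2
  else if ‖z‖ ≤ gam * lam then
    gam * lam * ‖z‖ / (gam - 1) - ‖z‖ ^ 2 / (2 * (gam - 1)) - gam * lam ^ 2 / (2 * (gam - 1))
  else gam * lam ^ 2 / 2

lemma hasGrad_normsq_half (p : ℕ) (z : EuclideanSpace ℝ (Fin p)) :
    HasGradientAt (fun y : EuclideanSpace ℝ (Fin p) => ‖y‖ ^ 2 / 2) z z := by
  rw [hasGradientAt_iff_hasFDerivAt]
  have h := (hasStrictFDerivAt_norm_sq z).hasFDerivAt.const_mul ((2:ℝ)⁻¹)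
  have heq : (fun y : EuclideanSpace ℝ (Fin p) => ‖y‖ ^ 2 / 2)
      = fun y => (2:ℝ)⁻¹ * ‖y‖ ^ 2 := by funext y; ring
  rw [heq]
  refine h.congr_fderiv ?_
  ext y
  simp [InnerProductSpace.toDual_apply_apply, real_inner_smul_left]

lemma hasGrad_norm (p : ℕ) (z : EuclideanSpace ℝ (Fin p)) (hz : z ≠ 0) :
    HasGradientAt (fun y : EuclideanSpace ℝ (Fin p) => ‖y‖) (‖z‖⁻¹ • z) z := by
  have hzn : ‖z‖ ≠ 0 := norm_ne_zero_iff.mpr hz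
  have hsq : HasFDerivAt (fun y : EuclideanSpace ℝ (Fin p) => ‖y‖ ^ 2)
      (2 • innerSL ℝ z) z := (hasStrictFDerivAt_norm_sq z).hasFDerivAt
  have hsqrt : HasDerivAt Real.sqrt (1 / (2 * Real.sqrt (‖z‖ ^ 2))) (‖z‖ ^ 2) :=
    Real.hasDerivAt_sqrt (by positivity)
  have h := hsqrt.comp_hasFDerivAt z hsq
  have heq : (fun y : EuclideanSpace ℝ (Fin p) => ‖y‖)
      = fun y => Real.sqrt (‖y‖ ^ 2) := by
    funext y; rw [Real.sqrt_sq (norm_nonneg y)]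
  rw [hasGradientAt_iff_hasFDerivAt, heq]
  refine h.congr_fderiv ?_
  ext y
  rw [Real.sqrt_sq (norm_nonneg z)]
  simp [InnerProductSpace.toDual_apply_apply, real_inner_smul_left]
  field_simp

theorem stmt_13 (p : ℕ) (lam gam : ℝ) (hlam : 0 < lam) (hgam : 1 < gam) :
    Continuous (groupMCPLoss p lam gam) ∧
    (∀ z : EuclideanSpace ℝ (Fin p), ‖z‖ ≠ lam → ‖z‖ ≠ gam * lam →
      gradient (groupMCPLoss p lam gam) z = z - groupMCPThresh p lam gam z) := by
  have hg1 : gam - 1 ≠ 0 := sub_ne_zero.mpr (ne_of_gt hgam)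
  have hlg : lam < gam * lam := (lt_mul_iff_one_lt_left hlam).mpr hgam
  constructor
  · have hc : Continuous (fun t : ℝ => if t ≤ lam then t ^ 2 / 2
        else if t ≤ gam * lam then
          gam * lam * t / (gam - 1) - t ^ 2 / (2 * (gam - 1)) - gam * lam ^ 2 / (2 * (gam - 1))
        else gam * lam ^ 2 / 2) := by
      apply Continuous.if_le
      · fun_prop
      · apply Continuous.if_le
        · fun_prop
        · fun_prop
        · exact continuous_id
        · exact continuous_const
        · intro t ht; subst ht; field_simp; ring
      · exact continuous_id
      · exact continuous_const
      · intro t ht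
        subst ht
        rw [if_pos hlg.le]
        field_simp; ring
    exact hc.comp continuous_norm
  · intro z h1 h2
    rcases h1.lt_or_gt with ha | hb
    · -- ‖z‖ < lam
      have hev : groupMCPLoss p lam gam =ᶠ[nhds z]
          fun y : EuclideanSpace ℝ (Fin p) => ‖y‖ ^ 2 / 2 := by
        filter_upwards [(isOpen_lt continuous_norm continuous_const).mem_nhds
          (show z ∈ {y : EuclideanSpace ℝ (Fin p) | ‖y‖ < lam} from ha)] with y hy
        simp [groupMCPLoss, le_of_lt hy]
      rw [((hasGrad_normsq_half p z).congr_of_eventuallyEq hev).gradient]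
      have hthresh : groupMCPThresh p lam gam z = 0 := by
        by_cases hz0 : z = 0
        · simp [groupMCPThresh, groupSoftThresh, hz0]
        · have hzn : 0 < ‖z‖ := norm_pos_iff.mpr hz0
          have : (1 : ℝ) - lam / ‖z‖ ≤ 0 := by
            have : (1 : ℝ) < lam / ‖z‖ := (one_lt_div hzn).mpr ha
            linarith
          simp [groupMCPThresh, groupSoftThresh, if_pos (ha.le.trans hlg.le),
            max_eq_left this]
      rw [hthresh, sub_zero]
    · rcases h2.lt_or_gt with hc | hd
      · -- lam < ‖z‖ < gam * lam
        have hzn : (0:ℝ) < ‖z‖ := hlam.trans hb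
        have hz0 : z ≠ 0 := by
          intro h; rw [h, norm_zero] at hzn; exact lt_irrefl 0 hzn
        have hzn' : ‖z‖ ≠ 0 := hzn.ne'
        have hev : groupMCPLoss p lam gam =ᶠ[nhds z]
            fun y : EuclideanSpace ℝ (Fin p) =>
              (gam * lam / (gam - 1)) * ‖y‖ - (gam - 1)⁻¹ * (‖y‖ ^ 2 / 2)
                - gam * lam ^ 2 / (2 * (gam - 1)) := by
          filter_upwards [((isOpen_lt continuous_const continuous_norm).inter
            (isOpen_lt continuous_norm continuous_const)).mem_nhds
            (show z ∈ {y : EuclideanSpace ℝ (Fin p) | lam < ‖y‖} ∩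
              {y : EuclideanSpace ℝ (Fin p) | ‖y‖ < gam * lam} from ⟨hb, hc⟩)]
            with y hy
          obtain ⟨hy1, hy2⟩ := hy
          simp only [Set.mem_setOf_eq] at hy1 hy2
          simp only [groupMCPLoss, if_neg (not_le.mpr hy1), if_pos hy2.le]
          field_simp
        have hn := hasGradientAt_iff_hasFDerivAt.mp (hasGrad_norm p z hz0)
        have hs := hasGradientAt_iff_hasFDerivAt.mp (hasGrad_normsq_half p z)
        have hF := ((hn.const_mul (gam * lam / (gam - 1))).sub
          (hs.const_mul (gam - 1)⁻¹)).sub_const (gam * lam ^ 2 / (2 * (gam - 1)))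
        have hG : HasGradientAt
            (fun y : EuclideanSpace ℝ (Fin p) =>
              (gam * lam / (gam - 1)) * ‖y‖ - (gam - 1)⁻¹ * (‖y‖ ^ 2 / 2)
                - gam * lam ^ 2 / (2 * (gam - 1)))
            (z - groupMCPThresh p lam gam z) z := by
          rw [hasGradientAt_iff_hasFDerivAt]
          refine hF.congr_fderiv ?_
          have hmax : max 0 (1 - lam / ‖z‖) = 1 - lam / ‖z‖ := by
            apply max_eq_right
            have : lam / ‖z‖ < 1 := (div_lt_one hzn).mpr hb
            linarith
          ext y
          simp only [groupMCPThresh, if_pos hc.le, groupSoftThresh, hmax,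
            InnerProductSpace.toDual_apply_apply, ContinuousLinearMap.coe_sub',
            Pi.sub_apply, ContinuousLinearMap.coe_smul', Pi.smul_apply,
            inner_sub_left, real_inner_smul_left, smul_smul, smul_eq_mul]
          field_simp
          ring
        rw [(hG.congr_of_eventuallyEq hev).gradient]
      · -- gam * lam < ‖z‖
        have hev : groupMCPLoss p lam gam =ᶠ[nhds z]
            fun _ : EuclideanSpace ℝ (Fin p) => gam * lam ^ 2 / 2 := by
          filter_upwards [(isOpen_lt continuous_const continuous_norm).mem_nhds
            (show z ∈ {y : EuclideanSpace ℝ (Fin p) | gam * lam < ‖y‖} from hd)] with y hy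
          have h1 : ¬ ‖y‖ ≤ lam := by push_neg; exact hlg.trans hy
          have h2 : ¬ ‖y‖ ≤ gam * lam := not_le.mpr hy
          simp [groupMCPLoss, h1, h2]
        rw [((hasGradientAt_const z (gam * lam ^ 2 / 2)).congr_of_eventuallyEq hev).gradient]
        rw [groupMCPThresh, if_neg (not_le.mpr hd), sub_self]
end

section
/- Let Θ : ℝ^p → ℝ^p with ψ(o) = o - Θ(o), and let ρ : ℝ^p → ℝ be differentiable with ∇ρ = ψ. Suppose (Û, Ô) ∈ ℝ^{n×p} × ℝ^{n×p} satisfies (i) ô_i = Θ(x_i - û_i) for each i, and (ii) vec(Û) minimizes u ↦ (1/2)‖vec(X) - u - vec(Ô)‖₂² + λ₁ g(u) for a convex function g : ℝ^{np} → ℝ. Then 0 ∈ -Ψ(X - Û) + λ₁ ∂g(vec(Û)), where Ψ(X - Û) stacks the vectors ψ(x_i - û_i); equivalently, Û is a stationary point of u ↦ Σᵢ ρ(x_i - u_i) + λ₁ g(u). -/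
open RealInnerProductSpace

section Aux

variable {E : Type*} [NormedAddCommGroup E] [InnerProductSpace ℝ E]

/-- Every real-valued convex function on a finite-dimensional inner product space
has a subgradient at every point. -/
lemma exists_subgradient_aux [FiniteDimensional ℝ E]
    (g : E → ℝ) (hg : ConvexOn ℝ Set.univ g) (u : E) :
    ∃ v : E, ∀ w, g u + ⟪v, w - u⟫ ≤ g w := by
  have hcont : Continuous g := by
    have h := hg.continuousOn isOpen_univ
    exact continuousOn_univ.mp h
  set S : Set (E × ℝ) := {q : E × ℝ | g q.1 < q.2} with hS
  have hSopen : IsOpen S := by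
    have hc : Continuous fun q : E × ℝ => q.2 - g q.1 :=
      continuous_snd.sub (hcont.comp continuous_fst)
    have := isOpen_lt (f := fun _ : E × ℝ => (0 : ℝ)) continuous_const hc
    simpa [S, sub_pos] using this
  have hSconv : Convex ℝ S := by
    rintro ⟨a, s⟩ hs ⟨b, t⟩ ht α β hα hβ hαβ
    simp only [S, Set.mem_setOf_eq] at hs ht
    simp only [S, Set.mem_setOf_eq, Prod.smul_mk, Prod.mk_add_mk, smul_eq_mul]
    have h1 : g (α • a + β • b) ≤ α * g a + β * g b :=
      hg.2 (Set.mem_univ a) (Set.mem_univ b) hα hβ hαβ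
    have h2 : α * g a + β * g b < α * s + β * t := by
      rcases eq_or_lt_of_le hα with h | h
      · have hβ1 : β = 1 := by linarith
        rw [← h, hβ1]; simpa using ht
      · rcases eq_or_lt_of_le hβ with h' | h'
        · have hα1 : α = 1 := by linarith
          rw [← h', hα1]; simpa using hs
        · nlinarith
    exact lt_of_le_of_lt h1 h2
  have hnot : ((u, g u) : E × ℝ) ∉ S := by simp [S]
  obtain ⟨f, hf⟩ := geometric_hahn_banach_open_point hSconv hSopen hnot
  set c : ℝ := f (0, 1) with hc
  have hadd : ∀ (w : E) (t : ℝ), f (w, t) = f (w, 0) + t * c := by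
    intro w t
    have he : (w, t) = (w, (0 : ℝ)) + t • ((0 : E), (1 : ℝ)) := by
      simp [Prod.ext_iff]
    rw [he, map_add, map_smul]
    simp [hc, smul_eq_mul]
  have hcneg : c < 0 := by
    have h1 : ((u, g u + 1) : E × ℝ) ∈ S := by simp [S]
    have := hf _ h1
    rw [hadd u (g u + 1), hadd u (g u)] at this
    nlinarith
  have hkey : ∀ w : E, f (w, 0) + g w * c ≤ f (u, 0) + g u * c := by
    intro w
    refine le_of_forall_pos_lt_add fun ε hε => ?_
    have hmem : ((w, g w + ε / (-c)) : E × ℝ) ∈ S := by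
      have : 0 < ε / (-c) := div_pos hε (by linarith)
      simp only [S, Set.mem_setOf_eq]; linarith
    have := hf _ hmem
    rw [hadd w _, hadd u _] at this
    have hne : c ≠ 0 := ne_of_lt hcneg
    have h5 : ε / (-c) * c = -ε := by
      rw [div_mul_eq_mul_div, div_eq_iff (neg_ne_zero.mpr hne)]
      ring
    have hexp : (g w + ε / (-c)) * c = g w * c - ε := by
      rw [add_mul, h5]
      ring
    rw [hexp] at this
    linarith
  set φ : E →L[ℝ] ℝ := f.comp (ContinuousLinearMap.inl ℝ E ℝ) with hφ
  have hφ_apply : ∀ w : E, φ w = f (w, 0) := fun w => rfl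
  set v : E := (InnerProductSpace.toDual ℝ E).symm ((-c)⁻¹ • φ) with hv
  have hvinner : ∀ z : E, ⟪v, z⟫ = (-c)⁻¹ * φ z := by
    intro z
    rw [hv, InnerProductSpace.toDual_symm_apply]
    simp only [ContinuousLinearMap.smul_apply, smul_eq_mul]
  refine ⟨v, fun w => ?_⟩
  have h1 := hkey w
  rw [← hφ_apply w, ← hφ_apply u] at h1
  have h2 : ⟪v, w - u⟫ = (-c)⁻¹ * (φ w - φ u) := by
    rw [hvinner, map_sub]
  have hcpos : 0 < -c := by linarith
  have h3 : (-c)⁻¹ * (φ w - φ u) ≤ g w - g u := by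
    rw [inv_mul_le_iff₀ hcpos]
    nlinarith
  rw [h2]
  linarith

end Aux

theorem stmt_17 (n p : ℕ)
    (Θ : EuclideanSpace ℝ (Fin p) → EuclideanSpace ℝ (Fin p))
    (ρ : EuclideanSpace ℝ (Fin p) → ℝ)
    (hρdiff : Differentiable ℝ ρ)
    (hρgrad : ∀ o : EuclideanSpace ℝ (Fin p), gradient ρ o = o - Θ o)
    (g : PiLp 2 (fun _ : Fin n => EuclideanSpace ℝ (Fin p)) → ℝ)
    (hg : ConvexOn ℝ Set.univ g)
    (lam1 : ℝ) (hlam1 : 0 ≤ lam1)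
    (x u o : PiLp 2 (fun _ : Fin n => EuclideanSpace ℝ (Fin p)))
    (hO : ∀ i : Fin n, o i = Θ (x i - u i))
    (hU : ∀ w : PiLp 2 (fun _ : Fin n => EuclideanSpace ℝ (Fin p)),
      (1 / 2) * ‖x - u - o‖ ^ 2 + lam1 * g u ≤ (1 / 2) * ‖x - w - o‖ ^ 2 + lam1 * g w) :
    ∃ v : PiLp 2 (fun _ : Fin n => EuclideanSpace ℝ (Fin p)),
      (∀ w, g u + ⟪v, w - u⟫ ≤ g w) ∧
      (fun i : Fin n => (x i - u i) - Θ (x i - u i)) = lam1 • v := by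
  set d := x - u - o with hd
  have hstack : (fun i : Fin n => (x i - u i) - Θ (x i - u i)) = d := by
    funext i
    rw [← hO i, hd]
    simp [PiLp.sub_apply]
  have hkey : ∀ w, ⟪d, w - u⟫ ≤ lam1 * (g w - g u) := by
    intro w
    set z := w - u with hz
    have hstep : ∀ t : ℝ, 0 < t → t ≤ 1 →
        ⟪d, z⟫ ≤ t / 2 * ‖z‖ ^ 2 + lam1 * (g w - g u) := by
      intro t ht ht1
      have h := hU (u + t • z)
      have hxw : x - (u + t • z) - o = d - t • z := by
        rw [hd]; abel
      have hnorm : ‖d - t • z‖ ^ 2 = ‖d‖ ^ 2 - 2 * (t * ⟪d, z⟫) + t ^ 2 * ‖z‖ ^ 2 := by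
        rw [norm_sub_sq_real, real_inner_smul_right, norm_smul, Real.norm_eq_abs,
          mul_pow, sq_abs]
      have hconv : g (u + t • z) ≤ (1 - t) * g u + t * g w := by
        have hcomb : u + t • z = (1 - t) • u + t • w := by
          rw [hz]; module
        rw [hcomb]
        exact hg.2 (Set.mem_univ u) (Set.mem_univ w) (by linarith) (le_of_lt ht) (by ring)
      rw [hxw, hnorm] at h
      have h2 : lam1 * g (u + t • z) ≤ lam1 * ((1 - t) * g u + t * g w) :=
        mul_le_mul_of_nonneg_left hconv hlam1
      have h4 : t * ⟪d, z⟫ ≤ t * (t / 2 * ‖z‖ ^ 2 + lam1 * (g w - g u)) := by nlinarith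
      exact le_of_mul_le_mul_left h4 ht
    refine le_of_forall_pos_lt_add fun ε hε => ?_
    rcases eq_or_lt_of_le (norm_nonneg z) with hz0 | hz0
    · have h1 := hstep 1 one_pos le_rfl
      rw [← hz0] at h1
      have h2 : (1 : ℝ) / 2 * (0 : ℝ) ^ 2 = 0 := by ring
      rw [h2, zero_add] at h1
      linarith
    · set t : ℝ := min 1 (ε / ‖z‖ ^ 2) with htd
      have htpos : 0 < t := lt_min one_pos (div_pos hε (by positivity))
      have h1 := hstep t htpos (min_le_left _ _)
      have hbound : t / 2 * ‖z‖ ^ 2 < ε := by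
        have ha : t ≤ ε / ‖z‖ ^ 2 := min_le_right _ _
        have hb : t * ‖z‖ ^ 2 ≤ ε := by
          rw [← le_div_iff₀ (by positivity)]; exact ha
        nlinarith
      linarith
  rcases eq_or_lt_of_le hlam1 with hl0 | hlpos
  · have hd0 : d = 0 := by
      have h1 := hkey (u + d)
      simp only [add_sub_cancel_left, ← hl0, zero_mul] at h1
      exact real_inner_self_nonpos.mp h1
    obtain ⟨v, hv⟩ := exists_subgradient_aux g hg u
    exact ⟨v, hv, by rw [hstack, hd0, ← hl0, zero_smul, WithLp.ofLp_zero]⟩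
  · refine ⟨lam1⁻¹ • d, fun w => ?_, ?_⟩
    · have h1 := hkey w
      rw [real_inner_smul_left]
      have h2 : lam1⁻¹ * ⟪d, w - u⟫ ≤ lam1⁻¹ * (lam1 * (g w - g u)) :=
        mul_le_mul_of_nonneg_left h1 (by positivity)
      rw [inv_mul_cancel_left₀ (ne_of_gt hlpos)] at h2
      linarith
    · rw [hstack, WithLp.ofLp_smul, smul_smul, mul_inv_cancel₀ (ne_of_gt hlpos), one_smul]
end
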